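/- Let γ = (ξ+(n−1)κ, ξ+(n−3)κ, …, ξ+(1−n)κ) ∈ ℂⁿ, let ε ∈ {±1}ⁿ, and let ε^{(n)} be ε with last entry replaced by +1. Then (αₙ, w_{ε^{(n)}} γ) = ξ − κ(ε₁ + ε₂ + ⋯ + ε_{n−1}), where αₙ = eₙ. -/

import Mathlib

/-- The simple reflections of the hyperoctahedral group `W₀ = Sₙ ⋉ (±1)ⁿ` acting on `ℂⁿ`:
for `i` with `i+1 < n`, `sᵢ` swaps coordinates `i` and `i+1`; the last simple reflection
negates the last coordinate. -/
noncomputable def sEquiv (n : ℕ) (i : Fin n) : Equiv.Perm (Fin n → ℂ) :=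
  if h : (i : ℕ) + 1 < n then
    (Equiv.swap i ⟨(i : ℕ) + 1, h⟩).arrowCongr (Equiv.refl ℂ)
  else
    Equiv.piCongrRight (fun j => if j = i then Equiv.neg ℂ else Equiv.refl ℂ)

/-- The element `sᵢ sᵢ₊₁ ⋯ sₙ` of `W₀` (all simple reflections from index `i` on, in
increasing order of index). -/
noncomputable def chainE (n : ℕ) (i : Fin n) : Equiv.Perm (Fin n → ℂ) :=
  (((List.finRange n).filter (fun j => decide (i ≤ j))).map (sEquiv n)).prod

/-- The element `w_ε = (s_{i_k}⋯sₙ)⋯(s_{i₂}⋯sₙ)(s_{i₁}⋯sₙ)` of `W₀`, where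
`i₁ < i₂ < ⋯ < i_k` are the positions of `-1` in `ε ∈ {±1}ⁿ`. -/
noncomputable def wE (n : ℕ) (ε : Fin n → ℤ) : Equiv.Perm (Fin n → ℂ) :=
  ((((List.finRange n).filter (fun i => decide (ε i = -1))).reverse).map (chainE n)).prod

/-- Let `γ = (ξ+(n-1)κ, ξ+(n-3)κ, …, ξ+(1-n)κ)`, let `ε ∈ {±1}ⁿ`, and let `ε⁽ⁿ⁾` be `ε`
with last entry replaced by `+1`. Then
`(αₙ, w_{ε⁽ⁿ⁾} γ) = ξ - κ(ε₁ + ⋯ + ε_{n-1})` where `αₙ = eₙ`. -/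
lemma filt (n a : ℕ) : ((List.finRange n).filter (fun j : Fin n => decide (a ≤ (j:ℕ)))) =
    (if h : a < n then (⟨a, h⟩ : Fin n) :: ((List.finRange n).filter (fun j : Fin n => decide (a+1 ≤ (j:ℕ)))) else ([] : List (Fin n))) := by
  induction n generalizing a with
  | zero => simp [List.finRange]
  | succ n ih =>
    rw [List.finRange_succ]
    rcases a with _ | b
    · simp [List.filter_map, Function.comp_def]
    · have hmap : ∀ f : Fin (n+1) → Bool, (List.filter f (List.map Fin.succ (List.finRange n))) = List.map Fin.succ (List.filter (fun j => f j.succ) (List.finRange n)) := by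
        intro f; rw [List.filter_map]; rfl
      simp only [List.filter_cons, hmap]
      have hb := ih b
      by_cases h : b < n
      · rw [dif_pos h] at hb
        simp only [Fin.val_zero, Fin.val_succ]
        rw [show (fun j : Fin n => decide (b + 1 ≤ (j:ℕ) + 1)) = (fun j : Fin n => decide (b ≤ (j:ℕ))) by funext j; simp, hb]
        simp [Nat.succ_lt_succ h, Fin.ext_iff, hmap]
      · rw [dif_neg h] at hb
        simp only [Fin.val_zero, Fin.val_succ]
        rw [show (fun j : Fin n => decide (b + 1 ≤ (j:ℕ) + 1)) = (fun j : Fin n => decide (b ≤ (j:ℕ))) by funext j; simp, hb]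
        simp [show ¬ b+1 < n+1 by omega, show ¬ b+1 ≤ 0 by omega]

lemma chain_list (n : ℕ) (i : Fin n) :
    chainE n i = if h : (i:ℕ)+1 < n then sEquiv n i * chainE n ⟨(i:ℕ)+1, h⟩ else sEquiv n i := by
  have e1 : (fun j : Fin n => decide (i ≤ j)) = (fun j : Fin n => decide ((i:ℕ) ≤ (j:ℕ))) := rfl
  unfold chainE
  rw [e1, filt]
  rw [dif_pos i.isLt]
  by_cases h : (i:ℕ)+1 < n
  · rw [dif_pos h]
    have e2 : (fun j : Fin n => decide ((⟨(i:ℕ)+1,h⟩ : Fin n) ≤ j)) = (fun j : Fin n => decide ((i:ℕ)+1 ≤ (j:ℕ))) := rfl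
    simp [e2]
  · rw [dif_neg h]
    have : ((List.finRange n).filter (fun j : Fin n => decide ((i:ℕ)+1 ≤ (j:ℕ)))) = [] := by
      apply List.filter_eq_nil_iff.mpr
      intro j _
      simp only [decide_eq_true_eq]
      omega
    rw [this]; simp

lemma sEquiv_swap_apply (n : ℕ) (i : Fin n) (h : (i:ℕ)+1 < n) (v : Fin n → ℂ) (k : Fin n) :
    sEquiv n i v k = v (Equiv.swap i ⟨(i:ℕ)+1, h⟩ k) := by
  simp [sEquiv, dif_pos h, Equiv.arrowCongr]

lemma sEquiv_neg_apply (n : ℕ) (i : Fin n) (h : ¬ ((i:ℕ)+1 < n)) (v : Fin n → ℂ) (k : Fin n) :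
    sEquiv n i v k = if k = i then - v k else v k := by
  simp only [sEquiv, dif_neg h, Equiv.piCongrRight_apply]
  by_cases hk : k = i <;> simp [hk]

lemma chain_eval (n : ℕ) (i : Fin n) (v : Fin n → ℂ) :
    (∀ k : Fin n, (k:ℕ) < (i:ℕ) → chainE n i v k = v k) ∧
    (∀ q (hq : q < n), (i:ℕ) < q → chainE n i v ⟨q, hq⟩ = v ⟨q-1, by omega⟩) := by
  by_cases h : (i:ℕ)+1 < n
  · have IH := chain_eval n ⟨(i:ℕ)+1, h⟩ v
    rw [chain_list, dif_pos h]
    constructor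
    · intro k hk
      have hki : k ≠ i := by simp [Fin.ext_iff]; omega
      have hki2 : k ≠ ⟨(i:ℕ)+1, h⟩ := by simp [Fin.ext_iff]; omega
      rw [Equiv.Perm.mul_apply, sEquiv_swap_apply n i h, Equiv.swap_apply_of_ne_of_ne hki hki2]
      exact IH.1 k (by simpa using by omega)
    · intro q hq hiq
      rw [Equiv.Perm.mul_apply, sEquiv_swap_apply n i h]
      by_cases hq1 : q = (i:ℕ)+1
      · have : Equiv.swap i ⟨(i:ℕ)+1, h⟩ ⟨q, hq⟩ = i := by
          subst hq1; exact Equiv.swap_apply_right _ _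
        rw [this]
        rw [IH.1 i (by simp)]
        congr 1
        simp [Fin.ext_iff]; omega
      · have h1 : (⟨q,hq⟩ : Fin n) ≠ i := by simp [Fin.ext_iff]; omega
        have h2 : (⟨q,hq⟩ : Fin n) ≠ ⟨(i:ℕ)+1, h⟩ := fun e => hq1 (by simpa [Fin.ext_iff] using e)
        rw [Equiv.swap_apply_of_ne_of_ne h1 h2]
        exact IH.2 q hq (show (i:ℕ)+1 < q by omega)
  · rw [chain_list, dif_neg h]
    constructor
    · intro k hk
      rw [sEquiv_neg_apply n i h]
      rw [if_neg (by simp [Fin.ext_iff]; omega)]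
    · intro q hq hiq
      omega
termination_by n - (i:ℕ)
decreasing_by omega

lemma prod_chain_eval (n : ℕ) (p : ℕ) (hp : p < n) :
    ∀ (L : List (Fin n)), L.Pairwise (· < ·) → (∀ x ∈ L, (x:ℕ) < p) → ∀ v : Fin n → ℂ,
      (L.reverse.map (chainE n)).prod v ⟨p, hp⟩ = v ⟨p - L.length, by omega⟩ := by
  intro L
  induction L with
  | nil => intro _ _ v; simp
  | cons i L ih =>
    intro hpw hlt v
    have hpwL : L.Pairwise (· < ·) := (List.pairwise_cons.mp hpw).2
    have hiL : ∀ x ∈ L, i < x := (List.pairwise_cons.mp hpw).1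
    -- counting: i + L.length < p
    have hcount : (i:ℕ) + L.length < p := by
      have hnd0 : L.Nodup := hpwL.imp (fun h => ne_of_lt h)
      have hnd : (L.map Fin.val).Nodup := List.Nodup.map Fin.val_injective hnd0
      have hsub : (L.map Fin.val).toFinset ⊆ Finset.Ioo (i:ℕ) p := by
        intro x hx
        simp only [List.mem_toFinset, List.mem_map] at hx
        obtain ⟨y, hy, rfl⟩ := hx
        exact Finset.mem_Ioo.mpr ⟨hiL y hy, hlt y (List.mem_cons_of_mem _ hy)⟩
      have := Finset.card_le_card hsub
      rw [List.toFinset_card_of_nodup hnd, Nat.card_Ioo, List.length_map] at this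
      have hip : (i:ℕ) < p := hlt i List.mem_cons_self
      omega
    rw [List.reverse_cons, List.map_append, List.prod_append]
    simp only [List.map_cons, List.map_nil, List.prod_cons, List.prod_nil, mul_one]
    rw [Equiv.Perm.mul_apply]
    rw [ih hpwL (fun x hx => hlt x (List.mem_cons_of_mem _ hx)) (chainE n i v)]
    rw [(chain_eval n i (v)).2 (p - L.length) (by omega) (by omega)]
    congr 1

theorem pairing_alpha_n_wE_gamma (n : ℕ) (hn : 1 ≤ n) (κ ξ : ℂ)
    (ε : Fin n → ℤ) (hε : ∀ j, ε j = 1 ∨ ε j = -1) :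
    let γ : Fin n → ℂ := fun j => ξ + ((n : ℂ) - 1 - 2 * ((j : ℕ) : ℂ)) * κ
    let ε' : Fin n → ℤ := fun j => if (j : ℕ) = n - 1 then 1 else ε j
    wE n ε' γ ⟨n - 1, by omega⟩ =
      ξ - κ * ∑ j ∈ Finset.univ.filter (fun j : Fin n => (j : ℕ) < n - 1), ((ε j : ℂ)) := by
  intro γ ε'
  set M : List (Fin n) := (List.finRange n).filter (fun i => decide (ε' i = -1)) with hM
  have hMpw : M.Pairwise (· < ·) := (List.pairwise_lt_finRange n).filter _
  have hMlt : ∀ x ∈ M, (x:ℕ) < n - 1 := by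
    intro x hx
    rw [hM, List.mem_filter] at hx
    have hx2 : ε' x = -1 := by simpa using hx.2
    by_contra hcon
    have : (x:ℕ) = n - 1 := by have := x.isLt; omega
    simp [ε', this] at hx2
  have key := prod_chain_eval n (n-1) (by omega) M hMpw hMlt γ
  have hLHS : wE n ε' γ ⟨n - 1, by omega⟩ = γ ⟨n - 1 - M.length, by omega⟩ := key
  -- identify M.length with a Finset card
  set T : Finset (Fin n) := Finset.univ.filter (fun j : Fin n => (j : ℕ) < n - 1) with hT
  set Tm : Finset (Fin n) := T.filter (fun j => ε j = -1) with hTm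
  have hMnd : M.Nodup := (List.nodup_finRange n).filter _
  have hMT : M.toFinset = Tm := by
    ext x
    simp only [List.mem_toFinset, hM, List.mem_filter, hTm, hT, Finset.mem_filter,
      Finset.mem_univ, List.mem_finRange, true_and, decide_eq_true_eq]
    constructor
    · intro hx
      have hlt := hMlt x (by rw [hM, List.mem_filter]; exact ⟨List.mem_finRange x, by simpa using hx⟩)
      refine ⟨hlt, ?_⟩
      have : ε' x = -1 := hx
      simpa [ε', show (x:ℕ) ≠ n-1 by omega] using this
    · intro ⟨h1, h2⟩
      show ε' x = -1
      simpa [ε', show (x:ℕ) ≠ n-1 by omega] using h2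
  have hlen : M.length = Tm.card := by
    rw [← List.toFinset_card_of_nodup hMnd, hMT]
  -- card of T
  have hTcard : T.card = n - 1 := by
    have : T = Finset.Iio (⟨n-1, by omega⟩ : Fin n) := by
      ext x; simp [hT, Finset.mem_Iio, Fin.lt_def]
    rw [this, Fin.card_Iio]
  have hTmT : Tm ⊆ T := Finset.filter_subset _ _
  have hk : Tm.card ≤ n - 1 := hTcard ▸ Finset.card_le_card hTmT
  -- sum evaluation
  have hsum : ∑ j ∈ T, ((ε j : ℂ)) = ((n:ℂ) - 1 - Tm.card) - Tm.card := by
    rw [← Finset.sum_filter_add_sum_filter_not T (fun j => ε j = -1)]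
    have h1 : ∑ j ∈ T.filter (fun j => ε j = -1), ((ε j : ℂ)) = -(Tm.card : ℂ) := by
      have hc : ∀ j ∈ T.filter (fun j => ε j = -1), ((ε j : ℂ)) = (-1 : ℂ) := fun j hj => by
        rw [(Finset.mem_filter.mp hj).2]; push_cast; ring
      rw [Finset.sum_congr rfl hc, Finset.sum_const, ← hTm]
      simp
    have h2 : ∑ j ∈ T.filter (fun j => ¬ ε j = -1), ((ε j : ℂ)) =
        ((T.filter (fun j => ¬ ε j = -1)).card : ℂ) := by
      have hc : ∀ j ∈ T.filter (fun j => ¬ ε j = -1), ((ε j : ℂ)) = (1 : ℂ) := fun j hj => by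
        rcases hε j with h | h
        · rw [h]; push_cast; ring
        · exact absurd h (Finset.mem_filter.mp hj).2
      rw [Finset.sum_congr rfl hc, Finset.sum_const]
      simp
    rw [h1, h2]
    have hsplit : (T.filter (fun j => ε j = -1)).card + (T.filter (fun j => ¬ ε j = -1)).card = T.card :=
      Finset.card_filter_add_card_filter_not _
    have : ((T.filter (fun j => ¬ ε j = -1)).card : ℂ) = (T.card : ℂ) - (Tm.card : ℂ) := by
      rw [← hTm] at hsplit
      have := congrArg (fun m : ℕ => (m : ℂ)) hsplit
      push_cast at this ⊢
      linear_combination this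
    rw [this, hTcard]
    have hn1 : ((n - 1 : ℕ) : ℂ) = (n : ℂ) - 1 := by
      push_cast [Nat.cast_sub hn]; ring
    rw [hn1]; ring
  rw [hLHS, hsum]
  show ξ + ((n : ℂ) - 1 - 2 * (((n - 1 - M.length : ℕ) : ℕ) : ℂ)) * κ = _
  rw [hlen]
  have hcast : (((n - 1 - Tm.card : ℕ) : ℕ) : ℂ) = (n : ℂ) - 1 - (Tm.card : ℂ) := by
    have h1 : ((n - 1 - Tm.card : ℕ) : ℂ) = ((n-1 : ℕ) : ℂ) - (Tm.card : ℂ) := by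
      rw [Nat.cast_sub hk]
    rw [h1, Nat.cast_sub hn]; push_cast; ring
  rw [hcast]; ring
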